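/- For every fixed real number α, the limit as the real variable x → ∞ of Γ(x)·x^α / Γ(x+α) equals 1. -/

import Mathlib

open Real Filter

-- Wendel inequality, upper: Γ(x+α) ≤ Γ(x) * x^α for 0 ≤ α ≤ 1, x > 0
lemma wendel_upper {α x : ℝ} (hα0 : 0 ≤ α) (hα1 : α ≤ 1) (hx : 0 < x) :
    Real.Gamma (x + α) ≤ Real.Gamma x * x ^ α := by
  have hΓx := Real.Gamma_pos_of_pos hx
  have hΓx1 := Real.Gamma_pos_of_pos (by linarith : (0:ℝ) < x + 1)
  have hc := Real.convexOn_log_Gamma.2 (Set.mem_Ioi.mpr hx)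
    (Set.mem_Ioi.mpr (by linarith : (0:ℝ) < x + 1)) (by linarith : 0 ≤ 1 - α) hα0
    (by ring)
  simp only [smul_eq_mul, Function.comp_apply] at hc
  have hpt : (1 - α) * x + α * (x + 1) = x + α := by ring
  rw [hpt] at hc
  rw [Real.Gamma_add_one hx.ne', Real.log_mul hx.ne' hΓx.ne',
    show (1 - α) * Real.log (Real.Gamma x) + α * (Real.log x + Real.log (Real.Gamma x))
      = Real.log (Real.Gamma x) + Real.log x * α by ring] at hc
  have := Real.exp_le_exp.mpr hc
  rwa [Real.exp_log (Real.Gamma_pos_of_pos (by linarith)), Real.exp_add,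
    Real.exp_log hΓx, ← Real.rpow_def_of_pos hx] at this

-- Wendel, lower: x * Γ(x) ≤ Γ(x+α) * (x+α)^(1-α)
lemma wendel_lower {α x : ℝ} (hα0 : 0 ≤ α) (hα1 : α ≤ 1) (hx : 0 < x) :
    x * Real.Gamma x ≤ Real.Gamma (x + α) * (x + α) ^ (1 - α) := by
  have hxα : (0:ℝ) < x + α := by linarith
  have hΓ := Real.Gamma_pos_of_pos hxα
  have hc := Real.convexOn_log_Gamma.2 (Set.mem_Ioi.mpr hxα)
    (Set.mem_Ioi.mpr (by linarith : (0:ℝ) < x + α + 1)) hα0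
    (by linarith : 0 ≤ 1 - α) (by ring)
  simp only [smul_eq_mul, Function.comp_apply] at hc
  have hpt : α * (x + α) + (1 - α) * (x + α + 1) = x + 1 := by ring
  rw [hpt] at hc
  rw [Real.Gamma_add_one hxα.ne', Real.log_mul hxα.ne' hΓ.ne',
    show α * Real.log (Real.Gamma (x + α))
        + (1 - α) * (Real.log (x + α) + Real.log (Real.Gamma (x + α)))
      = Real.log (Real.Gamma (x + α)) + Real.log (x + α) * (1 - α) by ring] at hc
  have := Real.exp_le_exp.mpr hc
  rwa [Real.exp_log (Real.Gamma_pos_of_pos (by linarith : (0:ℝ) < x + 1)),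
    Real.Gamma_add_one hx.ne', Real.exp_add,
    Real.exp_log hΓ, ← Real.rpow_def_of_pos hxα] at this

lemma wendel_tendsto {α : ℝ} (hα0 : 0 ≤ α) (hα1 : α ≤ 1) :
    Tendsto (fun x : ℝ => Real.Gamma x * x ^ α / Real.Gamma (x + α))
      atTop (nhds 1) := by
  have hub : Tendsto (fun x : ℝ => ((x + α) / x) ^ (1 - α)) atTop (nhds 1) := by
    have h1 : Tendsto (fun x : ℝ => (x + α) / x) atTop (nhds 1) := by
      have : (fun x : ℝ => (x + α) / x) =ᶠ[atTop] fun x => 1 + α / x := by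
        filter_upwards [eventually_gt_atTop 0] with x hx
        field_simp
      rw [tendsto_congr' this]
      simpa using (tendsto_const_nhds : Filter.Tendsto (fun _ : ℝ => (1:ℝ)) atTop (nhds 1)).add ((tendsto_const_nhds : Filter.Tendsto (fun _ : ℝ => α) atTop (nhds α)).div_atTop tendsto_id)
    simpa using h1.rpow_const (Or.inl one_ne_zero)
  refine tendsto_of_tendsto_of_tendsto_of_le_of_le' tendsto_const_nhds hub ?_ ?_
  · filter_upwards [eventually_gt_atTop 0] with x hx
    have hxα : (0:ℝ) < x + α := by linarith
    have hΓ := Real.Gamma_pos_of_pos hxα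
    rw [le_div_iff₀ hΓ, one_mul]
    exact wendel_upper hα0 hα1 hx
  · filter_upwards [eventually_gt_atTop 0] with x hx
    have hxα : (0:ℝ) < x + α := by linarith
    have hΓ := Real.Gamma_pos_of_pos hxα
    rw [div_le_iff₀ hΓ]
    have h := wendel_lower hα0 hα1 hx
    have hre : ((x + α) / x) ^ (1 - α) * Real.Gamma (x + α)
        = (Real.Gamma (x + α) * (x + α) ^ (1 - α)) * x ^ (α - 1) := by
      rw [Real.div_rpow hxα.le hx.le]
      rw [show α - 1 = -(1 - α) by ring, Real.rpow_neg hx.le]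
      field_simp [(Real.rpow_pos_of_pos hx (1 - α)).ne']
    rw [hre]
    calc Real.Gamma x * x ^ α = (x * Real.Gamma x) * x ^ (α - 1) := by
          rw [show α = 1 + (α - 1) by ring, Real.rpow_add hx, Real.rpow_one]; ring
      _ ≤ _ := by
          exact mul_le_mul_of_nonneg_right h (Real.rpow_nonneg hx.le _)

lemma step_up {α : ℝ}
    (h : Tendsto (fun x : ℝ => Real.Gamma x * x ^ α / Real.Gamma (x + α)) atTop (nhds 1)) :
    Tendsto (fun x : ℝ => Real.Gamma x * x ^ (α + 1) / Real.Gamma (x + (α + 1)))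
      atTop (nhds 1) := by
  have key : (fun x : ℝ => Real.Gamma x * x ^ (α + 1) / Real.Gamma (x + (α + 1)))
      =ᶠ[atTop] fun x => (Real.Gamma x * x ^ α / Real.Gamma (x + α)) * (x / (x + α)) := by
    filter_upwards [eventually_gt_atTop (max 0 (-α))] with x hx
    have hx0 : (0:ℝ) < x := lt_of_le_of_lt (le_max_left _ _) hx
    have hxα : (0:ℝ) < x + α := by
      have := lt_of_le_of_lt (le_max_right _ _) hx; linarith
    have hΓ := (Real.Gamma_pos_of_pos hxα).ne'
    rw [show x + (α + 1) = (x + α) + 1 by ring, Real.Gamma_add_one hxα.ne',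
      Real.rpow_add hx0, Real.rpow_one]
    field_simp
  rw [tendsto_congr' key]
  have hq : Tendsto (fun x : ℝ => x / (x + α)) atTop (nhds 1) := by
    have : (fun x : ℝ => x / (x + α)) =ᶠ[atTop] fun x => 1 / (1 + α / x) := by
      filter_upwards [eventually_gt_atTop (max 0 (-α))] with x hx
      have hx0 : (0:ℝ) < x := lt_of_le_of_lt (le_max_left _ _) hx
      have hxα : (0:ℝ) < x + α := by
        have := lt_of_le_of_lt (le_max_right _ _) hx; linarith
      field_simp
    rw [tendsto_congr' this]
    have : Tendsto (fun x : ℝ => 1 + α / x) atTop (nhds 1) := by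
      simpa using (tendsto_const_nhds : Filter.Tendsto (fun _ : ℝ => (1:ℝ)) atTop (nhds 1)).add ((tendsto_const_nhds : Filter.Tendsto (fun _ : ℝ => α) atTop (nhds α)).div_atTop tendsto_id)
    simpa using this.inv₀ one_ne_zero
  simpa using h.mul hq

lemma step_down {α : ℝ}
    (h : Tendsto (fun x : ℝ => Real.Gamma x * x ^ (α + 1) / Real.Gamma (x + (α + 1)))
      atTop (nhds 1)) :
    Tendsto (fun x : ℝ => Real.Gamma x * x ^ α / Real.Gamma (x + α)) atTop (nhds 1) := by
  have key : (fun x : ℝ => Real.Gamma x * x ^ α / Real.Gamma (x + α))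
      =ᶠ[atTop] fun x =>
        (Real.Gamma x * x ^ (α + 1) / Real.Gamma (x + (α + 1))) * ((x + α) / x) := by
    filter_upwards [eventually_gt_atTop (max 0 (-α))] with x hx
    have hx0 : (0:ℝ) < x := lt_of_le_of_lt (le_max_left _ _) hx
    have hxα : (0:ℝ) < x + α := by
      have := lt_of_le_of_lt (le_max_right _ _) hx; linarith
    have hΓ := (Real.Gamma_pos_of_pos hxα).ne'
    rw [show x + (α + 1) = (x + α) + 1 by ring, Real.Gamma_add_one hxα.ne',
      Real.rpow_add hx0, Real.rpow_one]
    field_simp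
  rw [tendsto_congr' key]
  have hq : Tendsto (fun x : ℝ => (x + α) / x) atTop (nhds 1) := by
    have : (fun x : ℝ => (x + α) / x) =ᶠ[atTop] fun x => 1 + α / x := by
      filter_upwards [eventually_gt_atTop 0] with x hx
      field_simp
    rw [tendsto_congr' this]
    simpa using (tendsto_const_nhds : Filter.Tendsto (fun _ : ℝ => (1:ℝ)) atTop (nhds 1)).add ((tendsto_const_nhds : Filter.Tendsto (fun _ : ℝ => α) atTop (nhds α)).div_atTop tendsto_id)
  simpa using h.mul hq

theorem Gamma_ratio_tendsto_one (α : ℝ) :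
    Filter.Tendsto (fun x : ℝ => Real.Gamma x * x ^ α / Real.Gamma (x + α))
      Filter.atTop (nhds 1) := by
  have main : ∀ (k : ℤ) (β : ℝ), 0 ≤ β → β ≤ 1 →
      Tendsto (fun x : ℝ => Real.Gamma x * x ^ (β + k) / Real.Gamma (x + (β + k)))
        atTop (nhds 1) := by
    intro k
    induction k using Int.induction_on with
    | zero => intro β h0 h1; simpa using wendel_tendsto h0 h1
    | succ n ih =>
        intro β h0 h1
        have := step_up (ih β h0 h1)
        convert this using 2 with x <;> push_cast <;> ring_nf
    | pred n ih =>
        intro β h0 h1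
        have := step_down (α := β + (-(n:ℤ) - 1)) ?_
        · convert this using 2 with x <;> push_cast <;> ring_nf
        · convert ih β h0 h1 using 2 with x <;> push_cast <;> ring_nf
  have h := main ⌊α⌋ (Int.fract α) (Int.fract_nonneg α) (Int.fract_lt_one α).le
  have hα : Int.fract α + (⌊α⌋ : ℝ) = α := by rw [add_comm]; exact Int.floor_add_fract α
  rwa [hα] at h
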